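/- arXiv:1909.12809 — 4 statements merged into one kernel-verified Lean document; each statement's English description precedes it below -/
import Mathlib

section
/- Let H be a closed real-linear subspace of a complex Hilbert space 𝓗. Then H is cyclic (H + iH dense) if and only if its symplectic complement H' = {ξ : Im⟨ξ, η⟩ = 0 ∀η ∈ H} is separating (H' ∩ iH' = {0}). -/
/- STATEMENT 2: H closed real subspace of complex Hilbert 𝓗: H is cyclic (H+iH dense)
iff its symplectic complement H' is separating (H' ∩ iH' = {0}). -/

variable {𝓗 : Type*} [NormedAddCommGroup 𝓗] [InnerProductSpace ℂ 𝓗] [CompleteSpace 𝓗]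

/-- Multiplication by `i` as a real-linear map. -/
noncomputable def mulI : 𝓗 →ₗ[ℝ] 𝓗 where
  toFun x := Complex.I • x
  map_add' := smul_add Complex.I
  map_smul' r x := by simpa using (smul_comm r Complex.I x).symm

/-- The symplectic complement of a real subspace of a complex Hilbert space. -/
noncomputable def symplComp (H : Submodule ℝ 𝓗) : Submodule ℝ 𝓗 where
  carrier := {ξ | ∀ η ∈ H, (inner ℂ ξ η : ℂ).im = 0}
  zero_mem' := by intro η hη; simp
  add_mem' := by
    intro a b ha hb η hη
    rw [inner_add_left, Complex.add_im, ha η hη, hb η hη, add_zero]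
  smul_mem' := by
    intro c x hx η hη
    have : (c : ℝ) • x = (c : ℂ) • x := by simp [Complex.coe_smul]
    rw [this, inner_smul_left]
    simp [hx η hη]

/-- `H` is cyclic if `H + iH` is dense in `𝓗`. -/
def IsCyclicSub (H : Submodule ℝ 𝓗) : Prop :=
  Dense ((H ⊔ H.map (mulI : 𝓗 →ₗ[ℝ] 𝓗) : Submodule ℝ 𝓗) : Set 𝓗)

/-- `H` is separating if `H ∩ iH = {0}`. -/
def IsSeparatingSub (H : Submodule ℝ 𝓗) : Prop :=
  H ⊓ H.map (mulI : 𝓗 →ₗ[ℝ] 𝓗) = ⊥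

/-- `H` is a standard subspace: closed, cyclic and separating. -/
def IsStandardSub (H : Submodule ℝ 𝓗) : Prop :=
  IsClosed (H : Set 𝓗) ∧ IsCyclicSub H ∧ IsSeparatingSub H

theorem stmt_2 (H : Submodule ℝ 𝓗) (hH : IsClosed (H : Set 𝓗)) :
    IsCyclicSub H ↔ IsSeparatingSub (symplComp H) := by
  classical
  letI : InnerProductSpace ℝ 𝓗 := InnerProductSpace.complexToReal
  have hre : ∀ a b : 𝓗, (inner ℂ a b : ℂ).re = (inner ℂ b a : ℂ).re := fun a b => by
    have := congrArg Complex.re (inner_conj_symm a b)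
    simpa only [Complex.conj_re] using this.symm
  have him : ∀ a b : 𝓗, (inner ℂ a b : ℂ).im = -(inner ℂ b a : ℂ).im := fun a b => by
    have := congrArg Complex.im (inner_conj_symm a b)
    simpa only [Complex.conj_im, neg_neg] using this.symm
  have horth : (H ⊔ H.map (mulI : 𝓗 →ₗ[ℝ] 𝓗) : Submodule ℝ 𝓗)ᗮ
      = symplComp H ⊓ (symplComp H).map (mulI : 𝓗 →ₗ[ℝ] 𝓗) := by
    ext ξ
    rw [← Submodule.inf_orthogonal, Submodule.mem_inf, Submodule.mem_inf]
    have h1 : ξ ∈ Hᗮ ↔ ∀ η ∈ H, (inner ℂ ξ η : ℂ).re = 0 := by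
      rw [Submodule.mem_orthogonal]
      refine forall₂_congr fun η hη => ?_
      rw [real_inner_eq_re_inner ℂ]
      exact (by rw [hre η ξ] : ((inner ℂ η ξ : ℂ).re = 0 ↔ (inner ℂ ξ η : ℂ).re = 0))
    have h2 : ξ ∈ (H.map (mulI : 𝓗 →ₗ[ℝ] 𝓗))ᗮ ↔ ξ ∈ symplComp H := by
      rw [Submodule.mem_orthogonal]
      constructor
      · intro h η hη
        have := h (Complex.I • η) ⟨η, hη, rfl⟩
        rw [real_inner_eq_re_inner ℂ, inner_smul_left] at this
        rw [him ξ η]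
        simpa [Complex.ext_iff] using this
      · rintro h _ ⟨η, hη, rfl⟩
        have h0 := h η hη
        rw [him ξ η] at h0
        show (inner ℂ (mulI η) ξ : ℂ).re = 0
        rw [show mulI η = Complex.I • η from rfl, inner_smul_left]
        simp [Complex.mul_re, neg_eq_zero.mp h0]
    have h3 : ξ ∈ (symplComp H).map (mulI : 𝓗 →ₗ[ℝ] 𝓗) ↔
        ∀ η ∈ H, (inner ℂ ξ η : ℂ).re = 0 := by
      constructor
      · rintro ⟨ζ, hζ, rfl⟩ η hη
        have := hζ η hη
        show ((inner ℂ (Complex.I • ζ) η : ℂ)).re = 0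
        rw [inner_smul_left]
        simpa [Complex.ext_iff] using this
      · intro h
        refine ⟨(-Complex.I) • ξ, fun η hη => ?_, ?_⟩
        · have := h η hη
          show ((inner ℂ ((-Complex.I) • ξ) η : ℂ)).im = 0
          rw [inner_smul_left]
          simpa [Complex.ext_iff] using this
        · show Complex.I • (-Complex.I) • ξ = ξ
          rw [smul_smul]
          simp
    rw [h1, h2, h3]
    tauto
  rw [IsCyclicSub, IsSeparatingSub, ← horth,
    Submodule.dense_iff_topologicalClosure_eq_top,
    Submodule.topologicalClosure_eq_top_iff]
end

section
/- Let H ⊂ 𝓗 be a standard subspace with Tomita operator S_H, and let E be an orthogonal projection on 𝓗 that commutes with S_H (i.e., E maps the domain H + iH into itself and S_H E ξ = E S_H ξ for all ξ in the domain). Then H = EH ⊕ (1−E)H as an internal direct sum of real subspaces, i.e., every ξ ∈ H satisfies Eξ ∈ H and (1−E)ξ ∈ H. Moreover, EH is a standard subspace of the complex Hilbert space E𝓗 and (1−E)H is a standard subspace of (1−E)𝓗. -/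
/- STATEMENT 5: H standard, E an orthogonal projection commuting with the Tomita operator
S_H.  Then every ξ ∈ H satisfies Eξ ∈ H and (1-E)ξ ∈ H (so H = EH ⊕ (1-E)H), and EH,
(1-E)H are standard subspaces of E𝓗 and (1-E)𝓗 respectively. -/

variable {𝓗 : Type*} [NormedAddCommGroup 𝓗] [InnerProductSpace ℂ 𝓗] [CompleteSpace 𝓗]

/-- `S` is the Tomita operator of `H`: the (anti-linear) partial map with domain `H + iH`
sending `ξ + iη ↦ ξ - iη` for `ξ, η ∈ H`. -/
def IsTomitaOf (H : Submodule ℝ 𝓗) (S : 𝓗 →ₗ.[ℝ] 𝓗) : Prop :=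
  S.domain = H ⊔ H.map (mulI : 𝓗 →ₗ[ℝ] 𝓗) ∧
  ∀ ξ ∈ H, ∀ η ∈ H, ∀ hmem : ξ + Complex.I • η ∈ S.domain,
    S ⟨ξ + Complex.I • η, hmem⟩ = ξ - Complex.I • η

/-- A real-linear isometric bijection is anti-unitary if it is conjugate-linear. -/
def IsAntiUnitary (J : 𝓗 ≃ₗᵢ[ℝ] 𝓗) : Prop :=
  ∀ (c : ℂ) (x : 𝓗), J (c • x) = (starRingEnd ℂ) c • J x

/-- `H` is a standard subspace of the (complex) subspace `V ⊆ 𝓗`: it is closed, `H + iH` is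
dense in `V`, and `H ∩ iH = {0}`. -/
def IsStandardIn (H : Submodule ℝ 𝓗) (V : Set 𝓗) : Prop :=
  IsClosed (H : Set 𝓗) ∧
  closure ((H ⊔ H.map (mulI : 𝓗 →ₗ[ℝ] 𝓗) : Submodule ℝ 𝓗) : Set 𝓗) = V ∧
  H ⊓ H.map (mulI : 𝓗 →ₗ[ℝ] 𝓗) = ⊥

lemma H_le_domain' (H : Submodule ℝ 𝓗) (S : 𝓗 →ₗ.[ℝ] 𝓗) (hS : IsTomitaOf H S) :
    H ≤ S.domain := by
  rw [hS.1]; exact le_sup_left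

lemma S_fixes' (H : Submodule ℝ 𝓗) (S : 𝓗 →ₗ.[ℝ] 𝓗) (hS : IsTomitaOf H S)
    {ξ : 𝓗} (hξ : ξ ∈ H) (h : ξ ∈ S.domain) : S ⟨ξ, h⟩ = ξ := by
  have hmem : ξ + Complex.I • (0 : 𝓗) ∈ S.domain := by simpa using h
  have h2 := hS.2 ξ hξ 0 H.zero_mem hmem
  have heq : (⟨ξ + Complex.I • (0 : 𝓗), hmem⟩ : S.domain) = ⟨ξ, h⟩ :=
    Subtype.ext (by simp)
  rw [heq] at h2
  simpa using h2

lemma mem_of_S_fix' (H : Submodule ℝ 𝓗) (S : 𝓗 →ₗ.[ℝ] 𝓗) (hS : IsTomitaOf H S)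
    {x : 𝓗} (hx : x ∈ S.domain) (hfix : S ⟨x, hx⟩ = x) : x ∈ H := by
  have hx' : x ∈ H ⊔ H.map (mulI : 𝓗 →ₗ[ℝ] 𝓗) := hS.1 ▸ hx
  obtain ⟨ξ, hξ, z, hz, hsum⟩ := Submodule.mem_sup.mp hx'
  obtain ⟨η, hη, rfl⟩ := hz
  have hzI : (mulI : 𝓗 →ₗ[ℝ] 𝓗) η = Complex.I • η := rfl
  have hmem : ξ + Complex.I • η ∈ S.domain := by rw [← hzI, hsum]; exact hx
  have h1 := hS.2 ξ hξ η hη hmem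
  have heq : (⟨ξ + Complex.I • η, hmem⟩ : S.domain) = ⟨x, hx⟩ := by
    apply Subtype.ext
    show ξ + Complex.I • η = x
    rw [← hzI]; exact hsum
  rw [heq, hfix] at h1
  -- h1 : x = ξ - I • η, and x = ξ + I • η
  have h2 : ξ - Complex.I • η = ξ + Complex.I • η := by rw [← h1, ← hsum, hzI]
  have h3 : (2 : ℝ) • (Complex.I • η) = 0 := by
    have := sub_eq_zero.mpr h2
    rw [two_smul]
    have : (ξ + Complex.I • η) - (ξ - Complex.I • η)
        = Complex.I • η + Complex.I • η := by abel
    rw [← this, h2, sub_self]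
  have h4 : Complex.I • η = 0 := by
    have := smul_eq_zero.mp h3
    rcases this with h | h
    · norm_num at h
    · exact h
  have hη0 : η = 0 := by
    rcases smul_eq_zero.mp h4 with h | h
    · exact absurd h Complex.I_ne_zero
    · exact h
  have : x = ξ := by rw [← hsum, hη0]; simp
  rw [this]; exact hξ

lemma proj_mem' (H : Submodule ℝ 𝓗) (S : 𝓗 →ₗ.[ℝ] 𝓗) (hS : IsTomitaOf H S)
    (P : 𝓗 →L[ℂ] 𝓗)
    (hdom : ∀ x ∈ S.domain, P x ∈ S.domain)
    (hcomm : ∀ (x : 𝓗) (hx : x ∈ S.domain) (hx' : P x ∈ S.domain),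
      S ⟨P x, hx'⟩ = P (S ⟨x, hx⟩))
    {ξ : 𝓗} (hξ : ξ ∈ H) : P ξ ∈ H := by
  have hd : ξ ∈ S.domain := H_le_domain' H S hS hξ
  have hPd : P ξ ∈ S.domain := hdom ξ hd
  refine mem_of_S_fix' H S hS hPd ?_
  rw [hcomm ξ hd hPd, S_fixes' H S hS hξ hd]

lemma standard_part' (H : Submodule ℝ 𝓗) (hH : IsStandardSub H)
    (S : 𝓗 →ₗ.[ℝ] 𝓗) (hS : IsTomitaOf H S)
    (P : 𝓗 →L[ℂ] 𝓗) (hPproj : P ∘L P = P)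
    (hdom : ∀ x ∈ S.domain, P x ∈ S.domain)
    (hcomm : ∀ (x : 𝓗) (hx : x ∈ S.domain) (hx' : P x ∈ S.domain),
      S ⟨P x, hx'⟩ = P (S ⟨x, hx⟩)) :
    IsStandardIn (H.map ((P.toLinearMap).restrictScalars ℝ)) (Set.range (⇑P)) := by
  set M : Submodule ℝ 𝓗 := H.map ((P.toLinearMap).restrictScalars ℝ) with hM
  have hid : ∀ x : 𝓗, P (P x) = P x := fun x => by
    have := DFunLike.congr_fun hPproj x
    simpa using this
  have hrange : IsClosed (Set.range ⇑P) := by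
    have hset : Set.range ⇑P = (fun x => P x - x) ⁻¹' {0} := by
      ext x
      simp only [Set.mem_range, Set.mem_preimage, Set.mem_singleton_iff, sub_eq_zero]
      constructor
      · rintro ⟨y, rfl⟩; exact hid y
      · intro h; exact ⟨x, h⟩
    rw [hset]
    exact isClosed_singleton.preimage (P.continuous.sub continuous_id)
  have hmemM : ∀ x : 𝓗, x ∈ M ↔ ∃ y ∈ H, P y = x := by
    intro x
    simp [hM, Submodule.mem_map]
  have hM_le_H : M ≤ H := by
    intro x hx
    obtain ⟨y, hy, rfl⟩ := (hmemM x).mp hx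
    exact proj_mem' H S hS P hdom hcomm hy
  refine ⟨?_, ?_, ?_⟩
  · -- closedness
    have hset : (M : Set 𝓗) = (H : Set 𝓗) ∩ Set.range ⇑P := by
      ext x
      constructor
      · intro hx
        obtain ⟨y, hy, rfl⟩ := (hmemM x).mp hx
        exact ⟨hM_le_H hx, ⟨y, rfl⟩⟩
      · rintro ⟨hxH, y, rfl⟩
        exact (hmemM _).mpr ⟨P y, hxH, hid y⟩
    rw [hset]
    exact hH.1.inter hrange
  · -- density
    apply Set.Subset.antisymm
    · rw [IsClosed.closure_subset_iff hrange]
      intro x hx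
      obtain ⟨a, ha, b, hb, rfl⟩ := Submodule.mem_sup.mp hx
      obtain ⟨ya, hya, rfl⟩ := (hmemM a).mp ha
      obtain ⟨c, hc, rfl⟩ := Submodule.mem_map.mp hb
      obtain ⟨yc, hyc, rfl⟩ := (hmemM c).mp hc
      refine ⟨ya + Complex.I • yc, ?_⟩
      have : (mulI : 𝓗 →ₗ[ℝ] 𝓗) (P yc) = Complex.I • P yc := rfl
      rw [this, map_add, map_smul]
    · rintro x ⟨y, rfl⟩
      have hdense : closure ((H ⊔ H.map (mulI : 𝓗 →ₗ[ℝ] 𝓗) : Submodule ℝ 𝓗) : Set 𝓗)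
          = Set.univ := hH.2.1.closure_eq
      have h1 : P y ∈ ⇑P '' closure ((H ⊔ H.map (mulI : 𝓗 →ₗ[ℝ] 𝓗) : Submodule ℝ 𝓗) : Set 𝓗) :=
        ⟨y, by rw [hdense]; trivial, rfl⟩
      have h2 := image_closure_subset_closure_image P.continuous h1
      refine closure_mono ?_ h2
      rintro _ ⟨d, hd, rfl⟩
      obtain ⟨a, ha, b, hb, rfl⟩ := Submodule.mem_sup.mp hd
      obtain ⟨c, hc, rfl⟩ := Submodule.mem_map.mp hb
      apply Submodule.mem_sup.mpr
      refine ⟨P a, (hmemM _).mpr ⟨a, ha, rfl⟩, Complex.I • P c,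
        Submodule.mem_map.mpr ⟨P c, (hmemM _).mpr ⟨c, hc, rfl⟩, rfl⟩, ?_⟩
      have : (mulI : 𝓗 →ₗ[ℝ] 𝓗) c = Complex.I • c := rfl
      rw [this, map_add, map_smul]
  · -- separating
    have h1 : M ⊓ M.map (mulI : 𝓗 →ₗ[ℝ] 𝓗)
        ≤ H ⊓ H.map (mulI : 𝓗 →ₗ[ℝ] 𝓗) :=
      inf_le_inf hM_le_H (Submodule.map_mono hM_le_H)
    rw [← le_bot_iff, ← hH.2.2]
    exact h1

theorem stmt_5 (H : Submodule ℝ 𝓗) (hH : IsStandardSub H)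
    (S : 𝓗 →ₗ.[ℝ] 𝓗) (hS : IsTomitaOf H S)
    (E : 𝓗 →L[ℂ] 𝓗) (hEproj : E ∘L E = E) (hEsa : IsSelfAdjoint E)
    (hEdom : ∀ x ∈ S.domain, E x ∈ S.domain)
    (hEcomm : ∀ (x : 𝓗) (hx : x ∈ S.domain) (hx' : E x ∈ S.domain),
      S ⟨E x, hx'⟩ = E (S ⟨x, hx⟩)) :
    (∀ ξ ∈ H, E ξ ∈ H ∧ ξ - E ξ ∈ H) ∧
    IsStandardIn (H.map ((E.toLinearMap).restrictScalars ℝ)) (Set.range (⇑E)) ∧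
    IsStandardIn (H.map (((1 - E).toLinearMap).restrictScalars ℝ)) (Set.range (⇑(1 - E))) := by
  have hid : ∀ x : 𝓗, E (E x) = E x := fun x => by
    have := DFunLike.congr_fun hEproj x
    simpa using this
  have hF : ∀ x : 𝓗, (1 - E) x = x - E x := fun x => by
    simp [ContinuousLinearMap.sub_apply]
  have hFproj : (1 - E) ∘L (1 - E) = 1 - E := by
    ext x
    simp [ContinuousLinearMap.sub_apply, map_sub, hid]
  have hFdom : ∀ x ∈ S.domain, (1 - E) x ∈ S.domain := fun x hx => by
    rw [hF]
    exact sub_mem hx (hEdom x hx)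
  have hFcomm : ∀ (x : 𝓗) (hx : x ∈ S.domain) (hx' : (1 - E) x ∈ S.domain),
      S ⟨(1 - E) x, hx'⟩ = (1 - E) (S ⟨x, hx⟩) := by
    intro x hx hx'
    have hEx : E x ∈ S.domain := hEdom x hx
    have heq : (⟨(1 - E) x, hx'⟩ : S.domain) = ⟨x, hx⟩ - ⟨E x, hEx⟩ :=
      Subtype.ext (by simp [hF])
    rw [heq, LinearPMap.map_sub, hEcomm x hx hEx, hF]
  refine ⟨?_, ?_, ?_⟩
  · intro ξ hξ
    have h1 : E ξ ∈ H := proj_mem' H S hS E hEdom hEcomm hξ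
    exact ⟨h1, sub_mem hξ h1⟩
  · exact standard_part' H hH S hS E hEproj hEdom hEcomm
  · exact standard_part' H hH S hS (1 - E) hFproj hFdom hFcomm
end

section
/- Let H be a standard subspace of 𝓗 and K ⊂ H a closed real-linear subspace such that Δ_H^{it} K = K for all t ∈ ℝ, where Δ_H is the modular operator of H. If K is cyclic in 𝓗 (i.e., K + iK is dense in 𝓗), then K = H. -/
/- STATEMENT 7: H standard, K ⊆ H a closed real subspace invariant under the modular group
of H (here characterized by the KMS condition).  If K is cyclic then K = H. -/

variable {𝓗 : Type*} [NormedAddCommGroup 𝓗] [InnerProductSpace ℂ 𝓗] [CompleteSpace 𝓗]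

/-- A strongly continuous one-parameter unitary group. -/
def IsOneParamUnitaryGroup (G : ℝ → (𝓗 ≃ₗᵢ[ℂ] 𝓗)) : Prop :=
  G 0 = LinearIsometryEquiv.refl ℂ 𝓗 ∧
  (∀ s t : ℝ, ∀ x : 𝓗, G (s + t) x = G s (G t x)) ∧
  ∀ x : 𝓗, Continuous fun t : ℝ => G t x

/-- The KMS condition (at inverse temperature 1) of the group `G` with respect to the real
subspace `H`: for all ξ, η ∈ H the function t ↦ ⟪η, G(t)ξ⟫ admits a bounded continuous
extension to the closed strip {z : -1 ≤ Im z ≤ 0}, holomorphic in the interior, whose value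
on the lower boundary is t ↦ ⟪ξ, G(t)η⟫.  This property characterizes the modular group
`t ↦ Δ_H^{it}` of a standard subspace `H`. -/
def SatisfiesKMSFor (H : Submodule ℝ 𝓗) (G : ℝ → (𝓗 ≃ₗᵢ[ℂ] 𝓗)) : Prop :=
  ∀ ξ ∈ H, ∀ η ∈ H, ∃ F : ℂ → ℂ,
    ContinuousOn F {z : ℂ | -1 ≤ z.im ∧ z.im ≤ 0} ∧
    (∀ z : ℂ, -1 < z.im → z.im < 0 → DifferentiableAt ℂ F z) ∧
    Bornology.IsBounded (F '' {z : ℂ | -1 ≤ z.im ∧ z.im ≤ 0}) ∧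
    (∀ t : ℝ, F (t : ℂ) = (inner ℂ η (G t ξ) : ℂ)) ∧
    (∀ t : ℝ, F ((t : ℂ) - Complex.I) = (inner ℂ ξ (G t η) : ℂ))

/-- `G` is the modular group of the standard subspace `H`. -/
def IsModularGroupOf (H : Submodule ℝ 𝓗) (G : ℝ → (𝓗 ≃ₗᵢ[ℂ] 𝓗)) : Prop :=
  IsOneParamUnitaryGroup G ∧ SatisfiesKMSFor H G

open Complex Set Filter Topology in

/-- A bounded function, holomorphic on the open strip `-1 < im z < 0`, continuous on the
closed strip, with purely imaginary boundary values, takes the same value at `0` and `-I`. -/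
lemma strip_boundary_eq (F : ℂ → ℂ)
    (hc : ContinuousOn F {z : ℂ | -1 ≤ z.im ∧ z.im ≤ 0})
    (hd : ∀ z : ℂ, -1 < z.im → z.im < 0 → DifferentiableAt ℂ F z)
    (hb : Bornology.IsBounded (F '' {z : ℂ | -1 ≤ z.im ∧ z.im ≤ 0}))
    (h0 : ∀ t : ℝ, (F (t : ℂ)).re = 0)
    (h1 : ∀ t : ℝ, (F ((t : ℂ) - Complex.I)).re = 0) :
    F 0 = F (-Complex.I) := by
  set Sc : Set ℂ := {z : ℂ | -1 ≤ z.im ∧ z.im ≤ 0} with hScdef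
  set S : Set ℂ := Complex.im ⁻¹' Set.Ioo (-1 : ℝ) 0 with hSdef
  have hSmem : ∀ z : ℂ, z ∈ S ↔ -1 < z.im ∧ z.im < 0 := fun z => Iff.rfl
  have hSsub : S ⊆ Sc := fun z hz => ⟨(hSmem z).1 hz |>.1.le, ((hSmem z).1 hz).2.le⟩
  have hScclosed : IsClosed Sc := by
    have : Sc = Complex.im ⁻¹' Set.Icc (-1 : ℝ) 0 := by ext z; simp [hScdef, Set.mem_Icc]
    rw [this]; exact isClosed_Icc.preimage Complex.continuous_im
  have hSopen : IsOpen S := isOpen_Ioo.preimage Complex.continuous_im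
  have hclS : closure S ⊆ Sc := closure_minimal hSsub hScclosed
  obtain ⟨C, hC⟩ := (isBounded_iff_forall_norm_le.1 hb)
  -- Step A : `re (F z) = 0` on the closed strip, by Phragmén–Lindelöf applied to `exp (±F)`.
  have hPL : ∀ (c : ℂ), (∀ t : ℝ, (c * F (t : ℂ)).re = 0) →
      (∀ t : ℝ, (c * F ((t : ℂ) - Complex.I)).re = 0) →
      ∀ z ∈ Sc, (c * F z).re ≤ 0 := by
    intro c hc0 hc1 z hz
    have key : ‖Complex.exp (c * F z)‖ ≤ 1 := by
      apply PhragmenLindelof.horizontal_strip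
        (a := (-1 : ℝ)) (b := (0 : ℝ)) (f := fun w => Complex.exp (c * F w))
      · constructor
        · intro w hw
          exact (((hd w hw.1 hw.2).const_mul c).cexp).differentiableWithinAt
        · exact ((continuousOn_const.mul (hc.mono hclS)).cexp)
      · refine ⟨0, by rw [show (0:ℝ) - (-1) = 1 by norm_num, div_one]; exact Real.pi_pos,
          ‖c‖ * C, Asymptotics.IsBigO.of_bound 1 ?_⟩
        rw [Filter.eventually_inf_principal]
        refine Filter.Eventually.of_forall fun w hw => ?_
        have hw' : w ∈ Sc := hSsub hw
        have h1' : ‖F w‖ ≤ C := hC _ ⟨w, hw', rfl⟩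
        have h2 : (c * F w).re ≤ ‖c‖ * C := by
          calc (c * F w).re ≤ ‖c * F w‖ := Complex.re_le_norm _
            _ = ‖c‖ * ‖F w‖ := by rw [norm_mul]
            _ ≤ ‖c‖ * C := mul_le_mul_of_nonneg_left h1' (norm_nonneg _)
        have he : ‖Complex.exp (c * F w)‖ = Real.exp ((c * F w).re) := by
          rw [Complex.norm_exp]
        rw [he, zero_mul, Real.exp_zero, mul_one, one_mul, Real.norm_eq_abs, Real.abs_exp]
        exact Real.exp_le_exp.2 h2
      · intro w hw
        have hw' : w = (w.re : ℂ) - Complex.I := by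
          apply Complex.ext <;> simp [hw]
        rw [hw', Complex.norm_exp, hc1 w.re, Real.exp_zero]
      · intro w hw
        have hw' : w = (w.re : ℂ) := by apply Complex.ext <;> simp [hw]
        rw [hw', Complex.norm_exp, hc0 w.re, Real.exp_zero]
      · exact hz.1
      · exact hz.2
    rw [Complex.norm_exp] at key
    exact Real.exp_le_one_iff.1 key
  have hre : ∀ z ∈ Sc, (F z).re = 0 := by
    intro z hz
    have hpos := hPL 1 (fun t => by rw [one_mul]; exact h0 t)
      (fun t => by rw [one_mul]; exact h1 t) z hz
    have hneg := hPL (-1) (fun t => by simp [h0 t]) (fun t => by simp [h1 t]) z hz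
    rw [one_mul] at hpos
    simp only [neg_one_mul, Complex.neg_re, neg_nonpos] at hneg
    linarith [neg_nonneg.2 hpos, hneg]
  -- Step B : the derivative of `F` vanishes on the open strip.
  have hderiv : ∀ z ∈ S, fderiv ℂ F z = 0 := by
    intro z hz
    obtain ⟨hz1, hz2⟩ := (hSmem z).1 hz
    have hdz : DifferentiableAt ℂ F z := hd z hz1 hz2
    set L := fderiv ℂ F z with hL
    have hF : HasFDerivAt F L z := hdz.hasFDerivAt
    have hR : HasFDerivAt F (L.restrictScalars ℝ) z := hF.restrictScalars ℝ
    have hreF : HasFDerivAt (fun w => (F w).re)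
        ((Complex.reCLM).comp (L.restrictScalars ℝ)) z :=
      (Complex.reCLM.hasFDerivAt).comp z hR
    have hev : (fun w => (F w).re) =ᶠ[nhds z] fun _ => (0 : ℝ) := by
      filter_upwards [hSopen.mem_nhds hz] with w hw
      exact hre w (hSsub hw)
    have h0' : HasFDerivAt (fun _ : ℂ => (0 : ℝ))
        ((Complex.reCLM).comp (L.restrictScalars ℝ)) z :=
      hreF.congr_of_eventuallyEq hev.symm
    have hzero : (Complex.reCLM).comp (L.restrictScalars ℝ) = 0 :=
      h0'.unique (hasFDerivAt_const 0 z)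
    have e1 : (L 1).re = 0 := by
      have := congrArg (fun (T : ℂ →L[ℝ] ℝ) => T 1) hzero
      simpa using this
    have e2 : (L Complex.I).re = 0 := by
      have := congrArg (fun (T : ℂ →L[ℝ] ℝ) => T Complex.I) hzero
      simpa using this
    have eLI : L Complex.I = Complex.I * L 1 := by
      simpa using L.map_smul Complex.I (1 : ℂ)
    have e3 : (L 1).im = 0 := by
      have : (Complex.I * L 1).re = -(L 1).im := by simp [Complex.mul_re]
      rw [eLI, this] at e2
      linarith
    have e4 : L 1 = 0 := Complex.ext e1 e3
    refine ContinuousLinearMap.ext fun w => ?_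
    have hw1 : (w : ℂ) = w • (1 : ℂ) := by simp
    rw [ContinuousLinearMap.zero_apply, hw1, map_smul, e4, smul_zero]
  -- Step C : `F` is constant on the open strip.
  have hSconvex : Convex ℝ S := (convex_Ioo (-1 : ℝ) 0).linear_preimage Complex.imLm
  have hdiffOn : DifferentiableOn ℂ F S := fun z hz =>
    (hd z ((hSmem z).1 hz).1 ((hSmem z).1 hz).2).differentiableWithinAt
  have hw₀ : (-(Complex.I : ℂ) / 2) ∈ S := by
    rw [hSmem]; constructor <;> simp <;> norm_num
  have hconst : ∀ z ∈ S, F z = F (-(Complex.I : ℂ) / 2) := fun z hz =>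
    hSconvex.is_const_of_fderivWithin_eq_zero hdiffOn
      (fun x hx => by rw [fderivWithin_of_isOpen hSopen hx]; exact hderiv x hx) hz hw₀
  -- Step D : extend the constancy to the boundary points `0` and `-I`.
  have key : ∀ (z₀ v : ℂ), (∀ s : ℝ, s ∈ Set.Ioo (0 : ℝ) 1 → z₀ + s • v ∈ S) → z₀ ∈ Sc →
      F z₀ = F (-(Complex.I : ℂ) / 2) := by
    intro z₀ v hpath hz₀
    have hne : (𝓝[Set.Ioo (0 : ℝ) 1] (0 : ℝ)).NeBot := by
      rw [← mem_closure_iff_nhdsWithin_neBot, closure_Ioo (by norm_num : (0 : ℝ) ≠ 1)]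
      exact Set.left_mem_Icc.2 (by norm_num)
    have hmapsto : ∀ᶠ s in 𝓝[Set.Ioo (0 : ℝ) 1] (0 : ℝ), z₀ + s • v ∈ Sc := by
      filter_upwards [self_mem_nhdsWithin] with s hs
      exact hSsub (hpath s hs)
    have hcont : Filter.Tendsto (fun s : ℝ => z₀ + s • v) (𝓝[Set.Ioo (0 : ℝ) 1] (0 : ℝ))
        (𝓝 z₀) := by
      have : Continuous (fun s : ℝ => z₀ + s • v) :=
        continuous_const.add (continuous_id.smul continuous_const)
      have h' : Filter.Tendsto (fun s : ℝ => z₀ + s • v) (𝓝[Set.Ioo (0 : ℝ) 1] (0 : ℝ))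
          (𝓝 (z₀ + (0 : ℝ) • v)) := (this.tendsto 0).mono_left nhdsWithin_le_nhds
      simpa using h'
    have hmap : Filter.Tendsto (fun s : ℝ => z₀ + s • v) (𝓝[Set.Ioo (0 : ℝ) 1] (0 : ℝ))
        (𝓝[Sc] z₀) := tendsto_nhdsWithin_iff.2 ⟨hcont, hmapsto⟩
    have hlim1 : Filter.Tendsto (fun s : ℝ => F (z₀ + s • v)) (𝓝[Set.Ioo (0 : ℝ) 1] (0 : ℝ))
        (𝓝 (F z₀)) := ((hc z₀ hz₀).tendsto).comp hmap
    have hlim2 : Filter.Tendsto (fun s : ℝ => F (z₀ + s • v)) (𝓝[Set.Ioo (0 : ℝ) 1] (0 : ℝ))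
        (𝓝 (F (-(Complex.I : ℂ) / 2))) := by
      apply Filter.Tendsto.congr' _ tendsto_const_nhds
      filter_upwards [self_mem_nhdsWithin] with s hs
      exact (hconst _ (hpath s hs)).symm
    exact tendsto_nhds_unique hlim1 hlim2
  have k0 : F 0 = F (-(Complex.I : ℂ) / 2) := by
    apply key 0 (-Complex.I)
    · intro s hs
      rw [hSmem]
      constructor <;> simp [Complex.smul_re, Complex.smul_im] <;> [linarith [hs.2]; exact hs.1]
    · constructor <;> simp
  have k1 : F (-Complex.I) = F (-(Complex.I : ℂ) / 2) := by
    apply key (-Complex.I) Complex.I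
    · intro s hs
      rw [hSmem]
      constructor <;> simp [Complex.smul_re, Complex.smul_im] <;> [linarith [hs.1]; linarith [hs.2]]
    · constructor <;> simp
  rw [k0, k1]

theorem stmt_7 (H : Submodule ℝ 𝓗) (hH : IsStandardSub H)
    (G : ℝ → (𝓗 ≃ₗᵢ[ℂ] 𝓗)) (hG : IsModularGroupOf H G)
    (K : Submodule ℝ 𝓗) (hKcl : IsClosed (K : Set 𝓗)) (hKH : K ≤ H)
    (hGK : ∀ t : ℝ, (⇑(G t)) '' (K : Set 𝓗) = (K : Set 𝓗))
    (hKcyc : IsCyclicSub K) :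
    K = H := by
  letI : InnerProductSpace ℝ 𝓗 := InnerProductSpace.complexToReal
  haveI : CompleteSpace K := hKcl.completeSpace_coe
  obtain ⟨⟨hG0, hGadd, hGcont⟩, hG2⟩ := hG
  -- every vector of `H` which is real-orthogonal to `K` vanishes
  have key : ∀ ζ : 𝓗, ζ ∈ H → (∀ u ∈ K, (inner ℂ u ζ : ℂ).re = 0) → ζ = 0 := by
    intro ζ hζH hζperp
    have hinner : ∀ η ∈ K, (inner ℂ η ζ : ℂ) = 0 := by
      intro η hη
      obtain ⟨F, hFc, hFd, hFb, hF0, hF1⟩ := hG2 ζ hζH η (hKH hη)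
      have hre0 : ∀ t : ℝ, (F (t : ℂ)).re = 0 := by
        intro t
        rw [hF0 t]
        have himg : η ∈ (⇑(G t)) '' (K : Set 𝓗) := by rw [hGK t]; exact hη
        obtain ⟨η', hη', rfl⟩ := himg
        have hmm : (inner ℂ ((G t) η') ((G t) ζ) : ℂ) = inner ℂ η' ζ :=
          (G t).inner_map_map η' ζ
        rw [hmm]
        exact hζperp η' hη'
      have hre1 : ∀ t : ℝ, (F ((t : ℂ) - Complex.I)).re = 0 := by
        intro t
        rw [hF1 t]
        have hmem : (G t) η ∈ K := by
          have h' : (G t) η ∈ (⇑(G t)) '' (K : Set 𝓗) := Set.mem_image_of_mem _ hη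
          rw [hGK t] at h'
          exact h'
        have : (inner ℂ ζ ((G t) η) : ℂ) = (starRingEnd ℂ) (inner ℂ ((G t) η) ζ : ℂ) :=
          (inner_conj_symm _ _).symm
        rw [this, Complex.conj_re]
        exact hζperp _ hmem
      have hkey := strip_boundary_eq F hFc hFd hFb hre0 hre1
      have e0 : F 0 = (inner ℂ η ζ : ℂ) := by
        have h := hF0 0
        rw [hG0] at h
        simpa using h
      have e1 : F (-Complex.I) = (inner ℂ ζ η : ℂ) := by
        have h := hF1 0
        rw [hG0] at h
        simpa using h
      rw [e0, e1] at hkey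
      have hcc : (inner ℂ η ζ : ℂ) = (starRingEnd ℂ) (inner ℂ η ζ : ℂ) :=
        hkey.trans (inner_conj_symm ζ η).symm
      have him : (inner ℂ η ζ : ℂ).im = 0 := by
        have := congrArg Complex.im hcc
        simp only [Complex.conj_im] at this
        linarith
      have hre : (inner ℂ η ζ : ℂ).re = 0 := by
        have h := hre0 0
        rw [show ((0 : ℝ) : ℂ) = 0 from Complex.ofReal_zero, e0] at h
        exact h
      exact Complex.ext hre him
    -- ζ is orthogonal to the dense set K + iK for the complex inner product
    have hall : ∀ v ∈ (K ⊔ K.map (mulI : 𝓗 →ₗ[ℝ] 𝓗) : Submodule ℝ 𝓗),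
        (inner ℂ v ζ : ℂ) = 0 := by
      intro v hv
      obtain ⟨a, ha, b, hb, rfl⟩ := Submodule.mem_sup.1 hv
      obtain ⟨k, hk, rfl⟩ := hb
      have hbk : ((mulI : 𝓗 →ₗ[ℝ] 𝓗) k : 𝓗) = Complex.I • k := rfl
      rw [inner_add_left, hinner a ha, hbk, inner_smul_left, hinner k hk,
        mul_zero, add_zero]
    have hfun : (fun v : 𝓗 => (inner ℂ v ζ : ℂ)) = fun _ => (0 : ℂ) := by
      apply Continuous.ext_on hKcyc
      · exact continuous_id.inner continuous_const
      · exact continuous_const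
      · exact hall
    have hzero : (inner ℂ ζ ζ : ℂ) = 0 := congrFun hfun ζ
    exact inner_self_eq_zero.1 hzero
  -- conclude via the orthogonal projection onto K
  refine le_antisymm hKH ?_
  intro ξ hξ
  have hk : ((K.orthogonalProjection ξ : K) : 𝓗) ∈ K := (K.orthogonalProjection ξ).2
  have hperp : ξ - (K.orthogonalProjection ξ : 𝓗) ∈ Kᗮ :=
    Submodule.sub_starProjection_mem_orthogonal (K := K) ξ
  have hperp' : ∀ u ∈ K, (inner ℂ u (ξ - (K.orthogonalProjection ξ : 𝓗)) : ℂ).re = 0 := by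
    intro u hu
    exact (Submodule.mem_orthogonal K _).1 hperp u hu
  have hz : ξ - (K.orthogonalProjection ξ : 𝓗) = 0 :=
    key _ (H.sub_mem hξ (hKH hk)) hperp'
  have hξk : ξ = ((K.orthogonalProjection ξ : K) : 𝓗) := by rwa [sub_eq_zero] at hz
  rw [hξk]; exact hk
end

section
/- Let W_3 = {x ∈ ℝ^{1+3} : |x_0| < x_3} and let E = {x ∈ ℝ^{1+3} : x_0 = 0 = x_3} be its edge. If U is a spatial rotation (an orthogonal transformation of (x_1,x_2,x_3) fixing x_0) and T is a Lorentz boost (a positive-definite symmetric Lorentz transformation) with U^{-1} W_3 = T W_3, then U^{-1} W_3 = W_3 = T W_3. -/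
/- STATEMENT 13: Let W₃ = {x : |x₀| < x₃}.  If U is a spatial rotation (a linear bijection
preserving the Euclidean norm and fixing the time coordinate) and T a Lorentz boost (a
symmetric positive-definite Lorentz transformation) with U⁻¹W₃ = TW₃, then
U⁻¹W₃ = W₃ = TW₃. -/

open Finset in
/-- The wedge in the x₃ direction. -/
def W3 : Set (Fin 4 → ℝ) := {x | |x 0| < x 3}

/-- The Minkowski quadratic form on ℝ⁴. -/
def minkQ (x : Fin 4 → ℝ) : ℝ := (x 0) ^ 2 - (x 1) ^ 2 - (x 2) ^ 2 - (x 3) ^ 2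

set_option maxHeartbeats 2000000 in
theorem stmt_13 (U : (Fin 4 → ℝ) ≃ₗ[ℝ] (Fin 4 → ℝ)) (T : (Fin 4 → ℝ) →ₗ[ℝ] (Fin 4 → ℝ))
    -- U is a spatial rotation: it fixes the time coordinate and is Euclidean-orthogonal
    (hU0 : ∀ x, U x 0 = x 0)
    (hUorth : ∀ x, ∑ i, (U x i) ^ 2 = ∑ i, (x i) ^ 2)
    -- T is a boost: symmetric, positive definite and a Lorentz transformation
    (hTsym : ∀ x y, ∑ i, T x i * y i = ∑ i, x i * T y i)
    (hTpos : ∀ x, x ≠ 0 → 0 < ∑ i, T x i * x i)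
    (hTlor : ∀ x, minkQ (T x) = minkQ x)
    -- hypothesis: U⁻¹ W₃ = T W₃
    (hW : (⇑U.symm) '' W3 = (⇑T) '' W3) :
    (⇑U.symm) '' W3 = W3 ∧ (⇑T) '' W3 = W3 := by
  classical
  have memU : ∀ x : Fin 4 → ℝ, x ∈ (⇑U.symm) '' W3 ↔ U x ∈ W3 := by
    intro x
    constructor
    · rintro ⟨y, hy, rfl⟩
      simpa [LinearEquiv.apply_symm_apply] using hy
    · intro h
      exact ⟨U x, h, U.symm_apply_apply x⟩
  have hedge : ∀ u : Fin 4 → ℝ, u 0 = 0 → u 3 = 0 → |T u 0| ≤ U (T u) 3 := by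
    intro u h0 h3
    by_contra hcon
    push_neg at hcon
    set t := (|T u 0| - U (T u) 3) / 2 with htdef
    have ht : 0 < t := by rw [htdef]; linarith
    have hw3 : (t • (Pi.single 3 1 : Fin 4 → ℝ)) ∈ W3 := by
      show |(t • (Pi.single 3 1 : Fin 4 → ℝ)) 0| < (t • (Pi.single 3 1 : Fin 4 → ℝ)) 3
      simp [Pi.single_apply]
      exact ht
    have hwmem : U.symm (t • (Pi.single 3 1 : Fin 4 → ℝ)) ∈ (⇑U.symm) '' W3 :=
      ⟨_, hw3, rfl⟩
    rw [hW] at hwmem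
    obtain ⟨z, hz, hzeq⟩ := hwmem
    have huz : u + z ∈ W3 := by
      simp only [W3, Set.mem_setOf_eq, Pi.add_apply] at hz ⊢
      rw [h0, h3]
      simpa using hz
    have hmem2 : T (u + z) ∈ (⇑U.symm) '' W3 := by
      rw [hW]; exact ⟨u + z, huz, rfl⟩
    have hfin := (memU _).mp hmem2
    have hsplit : U (T (u + z)) = U (T u) + t • (Pi.single 3 1 : Fin 4 → ℝ) := by
      rw [map_add, map_add, hzeq, LinearEquiv.apply_symm_apply]
    rw [hsplit] at hfin
    simp only [W3, Set.mem_setOf_eq, Pi.add_apply, Pi.smul_apply, Pi.single_apply] at hfin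
    rw [if_neg (show ¬(0:Fin 4) = 3 from by decide)] at hfin
    norm_num at hfin
    rw [hU0] at hfin
    rw [htdef] at hfin
    linarith
  have key : ∀ u : Fin 4 → ℝ, u 0 = 0 → u 3 = 0 → T u 0 = 0 := by
    intro u h0 h3
    have h1 := hedge u h0 h3
    have h2 := hedge (-u) (by simp [h0]) (by simp [h3])
    rw [map_neg] at h2
    simp only [Pi.neg_apply, abs_neg, map_neg] at h2
    exact abs_eq_zero.mp (le_antisymm (by linarith [abs_nonneg (T u 0)]) (abs_nonneg _))
  have hTW : (⇑T) '' W3 = W3 := by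
    have ext4 : ∀ v w : Fin 4 → ℝ, v 0 = w 0 → v 1 = w 1 → v 2 = w 2 → v 3 = w 3 → v = w := by
      intro v w h0 h1 h2 h3
      funext i
      fin_cases i <;> assumption
    -- component formula from symmetry
    have comp : ∀ (x : Fin 4 → ℝ) (i : Fin 4), T x i = ∑ k, x k * T (Pi.single i 1) k := by
      intro x i
      have h := hTsym x (Pi.single i 1)
      simp only [Pi.single_apply, mul_ite, mul_one, mul_zero, Finset.sum_ite_eq',
        Finset.mem_univ, if_true] at h
      exact h
    have symm : ∀ i j : Fin 4, T (Pi.single i 1) j = T (Pi.single j 1) i := by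
      intro i j
      have h := comp (Pi.single i 1) j
      simp only [Pi.single_apply, ite_mul, one_mul, zero_mul, Finset.sum_ite_eq',
        Finset.mem_univ, if_true] at h
      exact h
    have single_ne : ∀ i : Fin 4, (Pi.single i 1 : Fin 4 → ℝ) ≠ 0 := by
      intro i h
      have := congrFun h i
      simp at this
    -- Minkowski bilinear form invariance
    have hB : ∀ x y : Fin 4 → ℝ,
        T x 0 * T y 0 - T x 1 * T y 1 - T x 2 * T y 2 - T x 3 * T y 3
          = x 0 * y 0 - x 1 * y 1 - x 2 * y 2 - x 3 * y 3 := by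
      intro x y
      have h1 := hTlor (x + y)
      have h2 := hTlor x
      have h3 := hTlor y
      have hadd : ∀ i, T (x + y) i = T x i + T y i := fun i => by rw [map_add]; rfl
      simp only [minkQ, hadd, Pi.add_apply] at h1 h2 h3
      nlinarith [h1, h2, h3]
    -- notation for entries
    obtain ⟨a, ha⟩ : ∃ a, T (Pi.single (0:Fin 4) 1) 0 = a := ⟨_, rfl⟩
    obtain ⟨b, hb⟩ : ∃ b, T (Pi.single (0:Fin 4) 1) 3 = b := ⟨_, rfl⟩
    have h10 : T (Pi.single (1:Fin 4) 1) 0 = 0 := key _ (by simp) (by simp)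
    have h20 : T (Pi.single (2:Fin 4) 1) 0 = 0 := key _ (by simp) (by simp)
    have m01 : T (Pi.single (0:Fin 4) 1) 1 = 0 := (symm 0 1).trans h10
    have m02 : T (Pi.single (0:Fin 4) 1) 2 = 0 := (symm 0 2).trans h20
    have m30 : T (Pi.single (3:Fin 4) 1) 0 = b := (symm 3 0).trans hb
    have apos : 0 < a := by
      have h := hTpos (Pi.single (0:Fin 4) 1) (single_ne 0)
      simp only [Pi.single_apply, mul_ite, mul_one, mul_zero, Finset.sum_ite_eq',
        Finset.mem_univ, if_true] at h
      rw [ha] at h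
      exact h
    have aunit : a ^ 2 - b ^ 2 = 1 := by
      have h := hTlor (Pi.single (0:Fin 4) 1)
      simp only [minkQ] at h
      rw [ha, m01, m02, hb] at h
      simp at h
      linarith
    -- positive-definiteness fixed-point trick
    have pdfix : ∀ x : Fin 4 → ℝ, T (T x) = x → T x = x := by
      intro x hTT
      by_contra hd
      have hd' : T x - x ≠ 0 := sub_ne_zero.mpr hd
      have hp := hTpos _ hd'
      have hval : T (T x - x) = x - T x := by rw [map_sub, hTT]
      have hsum : ∑ i, T (T x - x) i * (T x - x) i = -∑ i, (T x i - x i) ^ 2 := by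
        rw [hval, Fin.sum_univ_four, Fin.sum_univ_four]
        simp only [Pi.sub_apply]
        ring
      rw [hsum] at hp
      have hnn : 0 ≤ ∑ i, (T x i - x i) ^ 2 := by positivity
      linarith
    obtain ⟨c1, c2, c30, c31, c32, c33⟩ :
        T (Pi.single (1:Fin 4) 1) = Pi.single 1 1 ∧ T (Pi.single (2:Fin 4) 1) = Pi.single 2 1 ∧
        T (Pi.single (3:Fin 4) 1) 0 = b ∧ T (Pi.single (3:Fin 4) 1) 1 = 0 ∧
        T (Pi.single (3:Fin 4) 1) 2 = 0 ∧ T (Pi.single (3:Fin 4) 1) 3 = a := by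
      by_cases hb0 : b = 0
      · -- case b = 0 : T is the identity
        have a1 : a = 1 := by
          rw [hb0] at aunit
          norm_num at aunit
          rcases aunit with h'' | h'' <;> linarith
        have col0 : T (Pi.single (0:Fin 4) 1) = Pi.single 0 1 := by
          refine ext4 _ _ ?_ ?_ ?_ ?_
          · rw [ha, a1]; simp
          · rw [m01]; simp
          · rw [m02]; simp
          · rw [hb, hb0]; simp
        have hsp0 : ∀ x : Fin 4 → ℝ, x 0 = 0 → T x 0 = 0 := by
          intro x hx
          rw [comp x 0, col0, Fin.sum_univ_four]
          simp [hx]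
        have hq : ∀ x : Fin 4 → ℝ, x 0 = 0 →
            T x 1 ^ 2 + T x 2 ^ 2 + T x 3 ^ 2 = x 1 ^ 2 + x 2 ^ 2 + x 3 ^ 2 := by
          intro x hx
          have h := hTlor x
          simp only [minkQ] at h
          rw [hsp0 x hx, hx] at h
          norm_num at h
          linarith
        have hS : ∀ x y : Fin 4 → ℝ, x 0 = 0 → y 0 = 0 →
            T x 1 * T y 1 + T x 2 * T y 2 + T x 3 * T y 3
              = x 1 * y 1 + x 2 * y 2 + x 3 * y 3 := by
          intro x y hx hy
          have hxy := hq (x + y) (by simp [hx, hy])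
          have hadd : ∀ i, T (x + y) i = T x i + T y i := fun i => by rw [map_add]; rfl
          simp only [hadd, Pi.add_apply] at hxy
          have h1 := hq x hx; have h2 := hq y hy
          linear_combination hxy / 2 - h1 / 2 - h2 / 2
        have hfix : ∀ x : Fin 4 → ℝ, x 0 = 0 → T x = x := by
          intro x hx
          have hTx0 : T x 0 = 0 := hsp0 x hx
          apply pdfix
          refine ext4 _ _ ?_ ?_ ?_ ?_
          · rw [hsp0 (T x) hTx0, hx]
          · have hs := hS x (Pi.single 1 1) hx (by simp)
            simp at hs
            rw [comp (T x) 1, Fin.sum_univ_four, hTx0, h10]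
            linarith [hs]
          · have hs := hS x (Pi.single 2 1) hx (by simp)
            simp at hs
            rw [comp (T x) 2, Fin.sum_univ_four, hTx0, h20]
            linarith [hs]
          · have hs := hS x (Pi.single 3 1) hx (by simp)
            simp at hs
            rw [comp (T x) 3, Fin.sum_univ_four, hTx0,
              hsp0 (Pi.single (3:Fin 4) 1) (by simp)]
            linarith [hs]
        have h3fix := hfix (Pi.single (3:Fin 4) 1) (by simp)
        refine ⟨hfix _ (by simp), hfix _ (by simp), ?_, ?_, ?_, ?_⟩
        · rw [h3fix, hb0]; simp
        · rw [h3fix]; simp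
        · rw [h3fix]; simp
        · rw [h3fix, a1]; simp
      · -- case b ≠ 0
        have m13 : T (Pi.single (1:Fin 4) 1) 3 = 0 := by
          have h := hB (Pi.single (0:Fin 4) 1) (Pi.single (1:Fin 4) 1)
          rw [ha, m01, m02, hb, h10] at h
          simp at h
          exact h.resolve_left hb0
        have m23 : T (Pi.single (2:Fin 4) 1) 3 = 0 := by
          have h := hB (Pi.single (0:Fin 4) 1) (Pi.single (2:Fin 4) 1)
          rw [ha, m01, m02, hb, h20] at h
          simp at h
          exact h.resolve_left hb0
        have m31 : T (Pi.single (3:Fin 4) 1) 1 = 0 := (symm 3 1).trans m13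
        have m32 : T (Pi.single (3:Fin 4) 1) 2 = 0 := (symm 3 2).trans m23
        have m33 : T (Pi.single (3:Fin 4) 1) 3 = a := by
          have h := hB (Pi.single (0:Fin 4) 1) (Pi.single (3:Fin 4) 1)
          rw [ha, m01, m02, hb, m30, m31, m32] at h
          simp at h
          have h' : b * (T (Pi.single (3:Fin 4) 1) 3 - a) = 0 := by linear_combination -h
          rcases mul_eq_zero.mp h' with h'' | h''
          · exact absurd h'' hb0
          · linarith
        -- the 2x2 spatial block
        have m21 : T (Pi.single (2:Fin 4) 1) 1 = T (Pi.single (1:Fin 4) 1) 2 := symm 2 1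
        have hq1 : T (Pi.single (1:Fin 4) 1) 1 ^ 2 + T (Pi.single (1:Fin 4) 1) 2 ^ 2 = 1 := by
          have h := hTlor (Pi.single (1:Fin 4) 1)
          simp only [minkQ] at h
          rw [h10, m13] at h
          simp at h
          linarith
        have hq2 : T (Pi.single (2:Fin 4) 1) 1 ^ 2 + T (Pi.single (2:Fin 4) 1) 2 ^ 2 = 1 := by
          have h := hTlor (Pi.single (2:Fin 4) 1)
          simp only [minkQ] at h
          rw [h20, m23] at h
          simp at h
          linarith
        have hq12 : T (Pi.single (1:Fin 4) 1) 1 * T (Pi.single (2:Fin 4) 1) 1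
            + T (Pi.single (1:Fin 4) 1) 2 * T (Pi.single (2:Fin 4) 1) 2 = 0 := by
          have h := hB (Pi.single (1:Fin 4) 1) (Pi.single (2:Fin 4) 1)
          rw [h10, h20, m13, m23] at h
          simp at h
          linarith
        have ppos : 0 < T (Pi.single (1:Fin 4) 1) 1 := by
          have h := hTpos (Pi.single (1:Fin 4) 1) (single_ne 1)
          simp only [Pi.single_apply, mul_ite, mul_one, mul_zero, Finset.sum_ite_eq',
            Finset.mem_univ, if_true] at h
          exact h
        have rpos : 0 < T (Pi.single (2:Fin 4) 1) 2 := by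
          have h := hTpos (Pi.single (2:Fin 4) 1) (single_ne 2)
          simp only [Pi.single_apply, mul_ite, mul_one, mul_zero, Finset.sum_ite_eq',
            Finset.mem_univ, if_true] at h
          exact h
        have q0 : T (Pi.single (1:Fin 4) 1) 2 = 0 := by
          rw [m21] at hq12
          have h' : T (Pi.single (1:Fin 4) 1) 2
              * (T (Pi.single (1:Fin 4) 1) 1 + T (Pi.single (2:Fin 4) 1) 2) = 0 := by
            linear_combination hq12
          rcases mul_eq_zero.mp h' with h'' | h''
          · exact h''
          · linarith
        have p1 : T (Pi.single (1:Fin 4) 1) 1 = 1 := by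
          rw [q0] at hq1
          norm_num at hq1
          rcases hq1 with h'' | h'' <;> linarith
        have r1 : T (Pi.single (2:Fin 4) 1) 2 = 1 := by
          have hz : T (Pi.single (2:Fin 4) 1) 1 = 0 := by rw [m21, q0]
          rw [hz] at hq2
          norm_num at hq2
          rcases hq2 with h'' | h'' <;> linarith
        refine ⟨?_, ?_, m30, m31, m32, m33⟩
        · refine ext4 _ _ ?_ ?_ ?_ ?_
          · rw [h10]; simp
          · rw [p1]; simp
          · rw [q0]; simp
          · rw [m13]; simp
        · refine ext4 _ _ ?_ ?_ ?_ ?_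
          · rw [h20]; simp
          · rw [m21, q0]; simp
          · rw [r1]; simp
          · rw [m23]; simp
    -- explicit formula for T
    have Tx0 : ∀ x : Fin 4 → ℝ, T x 0 = a * x 0 + b * x 3 := by
      intro x
      rw [comp x 0, Fin.sum_univ_four, ha, m01, m02, hb]
      ring
    have Tx1 : ∀ x : Fin 4 → ℝ, T x 1 = x 1 := by
      intro x
      rw [comp x 1, Fin.sum_univ_four, c1]
      simp
    have Tx2 : ∀ x : Fin 4 → ℝ, T x 2 = x 2 := by
      intro x
      rw [comp x 2, Fin.sum_univ_four, c2]
      simp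
    have Tx3 : ∀ x : Fin 4 → ℝ, T x 3 = b * x 0 + a * x 3 := by
      intro x
      rw [comp x 3, Fin.sum_univ_four, c30, c31, c32, c33]
      ring
    have hab1 : 0 < a + b := by nlinarith [apos, aunit]
    have hab2 : 0 < a - b := by nlinarith [apos, aunit]
    have hmem : ∀ x : Fin 4 → ℝ, T x ∈ W3 ↔ x ∈ W3 := by
      intro x
      simp only [W3, Set.mem_setOf_eq, Tx0, Tx3, abs_lt]
      constructor
      · rintro ⟨h1, h2⟩
        constructor <;> nlinarith [h1, h2, hab1, hab2]
      · rintro ⟨h1, h2⟩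
        constructor <;> nlinarith [mul_pos hab1 (show (0:ℝ) < x 3 + x 0 by linarith),
          mul_pos hab2 (show (0:ℝ) < x 3 - x 0 by linarith)]
    ext y
    constructor
    · rintro ⟨x, hx, rfl⟩
      exact (hmem x).mpr hx
    · intro hy
      refine ⟨![a * y 0 - b * y 3, y 1, y 2, -(b * y 0) + a * y 3], ?_, ?_⟩
      · simp only [W3, Set.mem_setOf_eq, abs_lt] at hy ⊢
        simp only [Matrix.cons_val_zero, Matrix.cons_val_one, Matrix.head_cons,
          Matrix.cons_val_two, Matrix.tail_cons, Matrix.cons_val_three]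
        constructor <;> nlinarith [mul_pos hab1 (show (0:ℝ) < y 3 - y 0 by linarith [hy.1, hy.2]),
          mul_pos hab2 (show (0:ℝ) < y 3 + y 0 by linarith [hy.1, hy.2])]
      · refine ext4 _ _ ?_ ?_ ?_ ?_
        · rw [Tx0]
          simp only [Matrix.cons_val_zero, Matrix.cons_val_one, Matrix.head_cons,
            Matrix.cons_val_two, Matrix.tail_cons, Matrix.cons_val_three]
          linear_combination y 0 * aunit
        · rw [Tx1]; simp
        · rw [Tx2]; simp
        · rw [Tx3]
          simp only [Matrix.cons_val_zero, Matrix.cons_val_one, Matrix.head_cons,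
            Matrix.cons_val_two, Matrix.tail_cons, Matrix.cons_val_three]
          linear_combination y 3 * aunit
  exact ⟨hW.trans hTW, hTW⟩
end
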